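/- Let V be a vector space, B : V × V → V bilinear, and φ : V → V a semisimple linear operator. Define the torsion T_φ(x,y) = φ²B(x,y) + B(φx,φy) − φ(B(φx,y)+B(x,φy)) and the shifted torsion S_φ(x,y) = T_φ(φx,y) + T_φ(x,φy). Then for eigenvectors x ∈ L_μ, y ∈ L_ν one has S_φ(x,y) = (μ+ν)(φ−μI)(φ−νI)(B(x,y)). Consequently S_φ ≡ 0 if and only if (μ+ν)B(L_μ,L_ν) ⊆ L_μ + L_ν for all eigenvalues μ, ν. -/

import Mathlib

/-- The (Courant–)Nijenhuis torsion of a linear operator `φ` relative to a bilinear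
bracket `B`. -/
def CNtorsion {K V : Type*} [Field K] [AddCommGroup V] [Module K V]
    (φ : Module.End K V) (B : V →ₗ[K] V →ₗ[K] V) : V → V → V :=
  fun x y => φ (φ (B x y)) + B (φ x) (φ y) - φ (B (φ x) y + B x (φ y))

/-- The shifted (Courant–)Nijenhuis torsion `S(x,y) = T(φx,y) + T(x,φy)`. -/
def CNshifted {K V : Type*} [Field K] [AddCommGroup V] [Module K V]
    (φ : Module.End K V) (B : V →ₗ[K] V →ₗ[K] V) : V → V → V :=
  fun x y => CNtorsion φ B (φ x) y + CNtorsion φ B x (φ y)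

section Aux

variable {K V : Type*} [Field K] [AddCommGroup V] [Module K V]
  (φ : Module.End K V) (B : V →ₗ[K] V →ₗ[K] V)

lemma CNshifted_add_left (x x' y : V) :
    CNshifted φ B (x + x') y = CNshifted φ B x y + CNshifted φ B x' y := by
  simp only [CNshifted, CNtorsion, map_add, LinearMap.add_apply]
  abel

lemma CNshifted_add_right (x y y' : V) :
    CNshifted φ B x (y + y') = CNshifted φ B x y + CNshifted φ B x y' := by
  simp only [CNshifted, CNtorsion, map_add, LinearMap.add_apply]
  abel

lemma CNshifted_zero_left (y : V) : CNshifted φ B 0 y = 0 := by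
  simp [CNshifted, CNtorsion]

lemma CNshifted_zero_right (x : V) : CNshifted φ B x 0 = 0 := by
  simp [CNshifted, CNtorsion]

lemma CN_formula {μ ν : K} {x y : V} (hx : φ x = μ • x) (hy : φ y = ν • y) :
    CNshifted φ B x y = (μ + ν) • (((φ - μ • 1) * (φ - ν • 1)) (B x y)) := by
  simp only [CNshifted, CNtorsion, hx, hy, map_smul, LinearMap.smul_apply, map_add,
    LinearMap.map_smul₂, Module.End.mul_apply, LinearMap.sub_apply,
    Module.End.one_apply, smul_add, smul_sub, smul_smul, map_sub]
  module

lemma eigen_sub_apply {μ : K} {x : V} (hx : φ x = μ • x) : (φ - μ • 1) x = 0 := by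
  simp [LinearMap.sub_apply, hx]

lemma comm_factors (μ ν : K) :
    (φ - μ • 1) * (φ - ν • 1) = (φ - ν • 1) * (φ - μ • 1) := by
  simp only [mul_sub, sub_mul, smul_mul_assoc, mul_smul_comm, one_mul, mul_one, smul_smul,
    smul_sub]
  rw [mul_comm μ ν]
  abel

end Aux

/-- For a semisimple operator `φ` and eigenvectors `x ∈ L_μ`, `y ∈ L_ν`,
the shifted torsion satisfies `S(x,y) = (μ+ν)(φ-μI)(φ-νI)(B(x,y))`; consequently
`S ≡ 0` iff `(μ+ν)·B(L_μ, L_ν) ⊆ L_μ + L_ν` for all eigenvalues `μ, ν`. -/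
theorem shifted_torsion_semisimple
    (V : Type*) [AddCommGroup V] [Module ℂ V] [FiniteDimensional ℂ V]
    (B : V →ₗ[ℂ] V →ₗ[ℂ] V) (φ : Module.End ℂ V) (hφ : φ.IsSemisimple) :
    (∀ (μ ν : ℂ) (x y : V), φ x = μ • x → φ y = ν • y →
        CNshifted φ B x y = (μ + ν) • (((φ - μ • 1) * (φ - ν • 1)) (B x y))) ∧
    ((∀ x y : V, CNshifted φ B x y = 0) ↔
      ∀ μ ν : ℂ, ∀ x ∈ Module.End.eigenspace φ μ, ∀ y ∈ Module.End.eigenspace φ ν,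
        (μ + ν) • B x y ∈ Module.End.eigenspace φ μ ⊔ Module.End.eigenspace φ ν) := by
  refine ⟨fun μ ν x y hx hy => CN_formula φ B hx hy, ?_, ?_⟩
  · -- forward direction
    intro h μ ν x hx y hy
    rw [Module.End.mem_eigenspace_iff] at hx hy
    have hS := CN_formula φ B hx hy
    rw [h x y] at hS
    have hP : ((φ - μ • 1) * (φ - ν • 1)) ((μ + ν) • B x y) = 0 := by
      rw [map_smul, ← hS]
    by_cases hμν : μ = ν
    · -- equal eigenvalues: use semisimplicity
      subst hμν
      have hmax : (μ + μ) • B x y ∈ φ.maxGenEigenspace μ := by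
        rw [Module.End.mem_maxGenEigenspace]
        exact ⟨2, by rw [pow_two]; exact hP⟩
      rw [hφ.isFinitelySemisimple.maxGenEigenspace_eq_eigenspace] at hmax
      exact Submodule.mem_sup_left hmax
    · -- distinct eigenvalues: partial fractions
      set w := (μ + ν) • B x y with hw
      have ha : (φ - ν • 1) w ∈ Module.End.eigenspace φ μ := by
        rw [Module.End.mem_eigenspace_iff]
        have h0 : (φ - μ • 1) ((φ - ν • 1) w) = 0 := by
          rw [← Module.End.mul_apply, hP]
        have := h0
        simp only [LinearMap.sub_apply, LinearMap.smul_apply, Module.End.one_apply,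
          sub_eq_zero] at this
        exact this
      have hb : (φ - μ • 1) w ∈ Module.End.eigenspace φ ν := by
        rw [Module.End.mem_eigenspace_iff]
        have h0 : (φ - ν • 1) ((φ - μ • 1) w) = 0 := by
          rw [← Module.End.mul_apply, ← comm_factors, hP]
        simp only [LinearMap.sub_apply, LinearMap.smul_apply, Module.End.one_apply,
          sub_eq_zero] at h0
        exact h0
      have hkey : w = (μ - ν)⁻¹ • ((φ - ν • 1) w) - (μ - ν)⁻¹ • ((φ - μ • 1) w) := by
        have hdiff : (φ - ν • 1) w - (φ - μ • 1) w = (μ - ν) • w := by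
          simp only [LinearMap.sub_apply, LinearMap.smul_apply, Module.End.one_apply]
          module
        rw [← smul_sub, hdiff, smul_smul, inv_mul_cancel₀ (sub_ne_zero.mpr hμν), one_smul]
      rw [hkey]
      exact Submodule.sub_mem _
        (Submodule.mem_sup_left (Submodule.smul_mem _ _ ha))
        (Submodule.mem_sup_right (Submodule.smul_mem _ _ hb))
  · -- reverse direction
    intro h x y
    have htop : ⨆ μ : ℂ, φ.eigenspace μ = ⊤ := by
      have h1 := Module.End.iSup_maxGenEigenspace_eq_top φ
      simp_rw [hφ.isFinitelySemisimple.maxGenEigenspace_eq_eigenspace] at h1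
      exact h1
    have key : ∀ μ ν : ℂ, ∀ x ∈ Module.End.eigenspace φ μ, ∀ y ∈ Module.End.eigenspace φ ν,
        CNshifted φ B x y = 0 := by
      intro μ ν x hxe y hye
      have hxe' := Module.End.mem_eigenspace_iff.mp hxe
      have hye' := Module.End.mem_eigenspace_iff.mp hye
      rw [CN_formula φ B hxe' hye', ← map_smul]
      obtain ⟨a, ha, b, hb, hab⟩ := Submodule.mem_sup.mp (h μ ν x hxe y hye)
      rw [Module.End.mem_eigenspace_iff] at ha hb
      have pa : ((φ - μ • 1) * (φ - ν • 1)) a = 0 := by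
        rw [comm_factors, Module.End.mul_apply, eigen_sub_apply φ ha, map_zero]
      have pb : ((φ - μ • 1) * (φ - ν • 1)) b = 0 := by
        rw [Module.End.mul_apply, eigen_sub_apply φ hb, map_zero]
      rw [← hab, map_add, pa, pb, add_zero]
    have hx : x ∈ ⨆ μ : ℂ, φ.eigenspace μ := htop ▸ Submodule.mem_top
    have hy : y ∈ ⨆ ν : ℂ, φ.eigenspace ν := htop ▸ Submodule.mem_top
    revert hy
    refine Submodule.iSup_induction (motive := fun x =>
        ∀ y, y ∈ (⨆ ν : ℂ, φ.eigenspace ν) → CNshifted φ B x y = 0) _ hx ?_ ?_ ?_ y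
    · intro μ x hxμ y hy
      refine Submodule.iSup_induction (motive := fun y => CNshifted φ B x y = 0) _ hy
        (fun ν y hyν => key μ ν x hxμ y hyν) (CNshifted_zero_right φ B x) ?_
      intro a b hA hB
      rw [CNshifted_add_right, hA, hB, add_zero]
    · intro y hy
      exact CNshifted_zero_left φ B y
    · intro a b hA hB y hy
      rw [CNshifted_add_left, hA y hy, hB y hy, add_zero]
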